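/- An irrational real number x is a quadratic irrational if and only if there exists a matrix M = [[a,b],[c,d]] ∈ SL(2,ℤ) with |a + d| > 2 whose fractional linear action fixes x, i.e. (a x + b)/(c x + d) = x. (Such M are the hyperbolic elements of the modular group; their fixed irrational points on ℝ correspond to the closed geodesics of the modular surface.) -/

import Mathlib

/-- An irrational real number is a quadratic irrational iff it is fixed by the
fractional linear action of a hyperbolic element of `SL(2,ℤ)` (an element of trace
of absolute value greater than `2`). -/
theorem quadratic_irrational_iff_fixed_by_hyperbolic (x : ℝ) (hx : Irrational x) :
    (∃ A B C : ℤ, A ≠ 0 ∧ (A : ℝ) * x ^ 2 + (B : ℝ) * x + (C : ℝ) = 0) ↔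
      ∃ M : Matrix.SpecialLinearGroup (Fin 2) ℤ,
        2 < |M 0 0 + M 1 1| ∧
        ((M 0 0 : ℝ) * x + (M 0 1 : ℝ)) / ((M 1 0 : ℝ) * x + (M 1 1 : ℝ)) = x := by
  have lin : ∀ c d : ℤ, c ≠ 0 → (c : ℝ) * x + (d : ℝ) ≠ 0 := by
    intro c d hc h
    have : Irrational ((c : ℝ) * x + (d : ℝ)) := (hx.intCast_mul hc).add_intCast d
    exact this.ne_int 0 (by simpa using h)
  constructor
  · rintro ⟨A, B, C, hA, hroot⟩
    have key : (2 * (A : ℝ) * x + (B : ℝ)) ^ 2 = ((B ^ 2 - 4 * A * C : ℤ) : ℝ) := by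
      push_cast
      linear_combination (4 * (A : ℝ)) * hroot
    have hDpos : 0 < B ^ 2 - 4 * A * C := by
      rcases lt_trichotomy (B ^ 2 - 4 * A * C) 0 with h | h | h
      · exfalso
        have h' : ((B ^ 2 - 4 * A * C : ℤ) : ℝ) < 0 := by exact_mod_cast h
        nlinarith [key, sq_nonneg (2 * (A : ℝ) * x + (B : ℝ))]
      · exfalso
        have h0 : (2 * (A : ℝ) * x + (B : ℝ)) = 0 := by
          have hk := key; rw [h] at hk
          simpa using pow_eq_zero_iff (n := 2) (by norm_num) |>.mp (by simpa using hk)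
        exact lin (2 * A) B (by simpa using hA) (by push_cast; linarith)
      · exact h
    have hDns : ¬ IsSquare (B ^ 2 - 4 * A * C) := by
      rintro ⟨r, hr⟩
      have hr' : ((B ^ 2 - 4 * A * C : ℤ) : ℝ) = (r : ℝ) * r := by exact_mod_cast congrArg (Int.cast : ℤ → ℝ) hr
      have : (2 * (A : ℝ) * x + (B : ℝ) - r) * (2 * (A : ℝ) * x + (B : ℝ) + r) = 0 := by
        nlinarith [key]
      rcases mul_eq_zero.mp this with h | h
      · exact lin (2 * A) (B - r) (by simpa using hA) (by push_cast; linarith)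
      · exact lin (2 * A) (B + r) (by simpa using hA) (by push_cast; linarith)
    obtain ⟨p, q, hpell, hq⟩ := Pell.exists_of_not_isSquare hDpos hDns
    refine ⟨⟨!![p - B * q, -(2 * C * q); 2 * A * q, p + B * q], ?_⟩, ?_, ?_⟩
    · simp only [Matrix.det_fin_two_of]
      linear_combination hpell
    · have hD2 : 2 ≤ B ^ 2 - 4 * A * C := by
        rcases lt_or_ge (B ^ 2 - 4 * A * C) 2 with h | h
        · exfalso
          have : B ^ 2 - 4 * A * C = 1 := by omega
          exact hDns ⟨1, by omega⟩
        · exact h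
      have hq1 : 1 ≤ q ^ 2 := by
        have : 0 < q ^ 2 := by positivity
        omega
      have hp3 : 3 ≤ p ^ 2 := by nlinarith
      have habs : 2 ≤ |p| := by nlinarith [sq_abs p, abs_nonneg p]
      show 2 < |(p - B * q) + (p + B * q)|
      rw [show p - B * q + (p + B * q) = 2 * p by ring, abs_mul]
      rw [show |(2:ℤ)| = 2 by norm_num]
      linarith
    · show ((((p - B * q : ℤ) : ℝ)) * x + ((-(2 * C * q) : ℤ) : ℝ)) /
          (((2 * A * q : ℤ) : ℝ) * x + ((p + B * q : ℤ) : ℝ)) = x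
      have hden : ((2 * A * q : ℤ) : ℝ) * x + ((p + B * q : ℤ) : ℝ) ≠ 0 :=
        lin (2 * A * q) (p + B * q) (by simp [hA, hq])
      rw [div_eq_iff hden]
      push_cast
      linear_combination (-2 * (q : ℝ)) * hroot
  · rintro ⟨M, htr, hfix⟩
    have hdet : M 0 0 * M 1 1 - M 0 1 * M 1 0 = 1 := by
      have := M.prop
      rwa [Matrix.det_fin_two] at this
    have hc : M 1 0 ≠ 0 := by
      intro h
      rw [h] at hdet
      simp at hdet
      rcases Int.mul_eq_one_iff_eq_one_or_neg_one.mp hdet with ⟨h1, h2⟩ | ⟨h1, h2⟩ <;>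
        rw [h1, h2] at htr <;> norm_num at htr
    have hden : ((M 1 0 : ℤ) : ℝ) * x + ((M 1 1 : ℤ) : ℝ) ≠ 0 := lin _ _ hc
    rw [div_eq_iff hden] at hfix
    refine ⟨M 1 0, M 1 1 - M 0 0, -(M 0 1), hc, ?_⟩
    push_cast
    linear_combination -hfix
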